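/- Let X be an initially κ-compact Hausdorff space such that wL_c(X) ≤ κ, t(X) ≤ κ, ψ_c(X) ≤ κ, and X has a dense set of points of character at most κ. Then |X| ≤ 2^κ. (Alas's theorem, derived from the main theorem and the initial-κ-compactness lemma.) -/

import Mathlib

open Set Cardinal

universe u

namespace AlasAux

set_option linter.unusedVariables false
set_option linter.unusedTactic false
set_option linter.unreachableTactic false


variable {κ : Cardinal.{u}}

lemma aleph0_le_two_power (hκ : ℵ₀ ≤ κ) : ℵ₀ ≤ 2 ^ κ :=
  hκ.trans (cantor κ).le

lemma two_power_mul_two_power (hκ : ℵ₀ ≤ κ) : (2:Cardinal.{u}) ^ κ * 2 ^ κ = 2 ^ κ :=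
  mul_eq_self (aleph0_le_two_power hκ)

lemma two_power_pow (hκ : ℵ₀ ≤ κ) : ((2:Cardinal.{u}) ^ κ) ^ κ = 2 ^ κ := by
  rw [← power_mul, mul_eq_self hκ]

/-- every nonempty set of size ≤ κ is the range of a function from `κ.out`. -/
lemma exists_range_eq {α : Type u} {S : Set α} (hS : S.Nonempty) (h : #S ≤ κ) :
    ∃ f : κ.out → α, Set.range f = S := by
  have : Nonempty S := hS.to_subtype
  obtain ⟨e⟩ : Nonempty (S ↪ κ.out) := by
    rw [← Cardinal.le_def, Cardinal.mk_out]; exact h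
  refine ⟨Subtype.val ∘ Function.invFun e, ?_⟩
  rw [Set.range_comp, Function.invFun_surjective e.injective |>.range_eq, Set.image_univ,
    Subtype.range_val]

/-- the collection of ≤κ-sized subsets of a set of size ≤ 2^κ has size ≤ 2^κ. -/
lemma mk_small_subsets_le {α : Type u} (hκ : ℵ₀ ≤ κ) {A : Set α} (hA : #A ≤ 2 ^ κ) :
    #{S : Set α | S ⊆ A ∧ #S ≤ κ} ≤ 2 ^ κ := by
  have hsub : {S : Set α | S ⊆ A ∧ #S ≤ κ} ⊆
      insert (∅ : Set α) (Set.range fun f : κ.out → A => Subtype.val '' Set.range f) := by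
    rintro S ⟨hSA, hSκ⟩
    rcases S.eq_empty_or_nonempty with rfl | hSne
    · exact Set.mem_insert _ _
    · right
      set S₀ : Set A := Subtype.val ⁻¹' S with hS₀
      have hS₀ne : S₀.Nonempty := by
        obtain ⟨x, hx⟩ := hSne; exact ⟨⟨x, hSA hx⟩, hx⟩
      have hS₀κ : #S₀ ≤ κ := by
        refine le_trans ?_ hSκ
        exact Cardinal.mk_preimage_of_injective _ _ Subtype.val_injective
      obtain ⟨f, hf⟩ := exists_range_eq hS₀ne hS₀κ
      refine ⟨f, ?_⟩
      show Subtype.val '' Set.range f = S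
      rw [hf, hS₀, Set.image_preimage_eq_of_subset]
      rwa [Subtype.range_val]
  refine (mk_le_mk_of_subset hsub).trans ?_
  refine (Cardinal.mk_insert_le).trans ?_
  have h1 : #(Set.range fun f : κ.out → A => Subtype.val '' Set.range f) ≤ 2 ^ κ := by
    refine (mk_range_le).trans ?_
    rw [← Cardinal.power_def, Cardinal.mk_out]
    calc #A ^ κ ≤ (2 ^ κ) ^ κ := Cardinal.power_le_power_right hA
    _ = 2 ^ κ := two_power_pow hκ
  calc #(Set.range fun f : κ.out → A => Subtype.val '' Set.range f) + 1
      ≤ 2 ^ κ + 1 := by exact add_le_add_left h1 1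
    _ = 2 ^ κ := Cardinal.add_one_eq (aleph0_le_two_power hκ)

/-- bounding a union of ordinal-indexed sets. -/
lemma mk_bUnion_ord_le {X : Type u} (H : Ordinal.{u} → Set X) (α : Ordinal.{u})
    {c : Cardinal.{u}} (hc : ℵ₀ ≤ c) (hα : α.card ≤ c) (hH : ∀ β < α, #(H β) ≤ c) :
    #(⋃ β, ⋃ _ : β < α, H β) ≤ c := by
  have := Cardinal.mk_biUnion_le_lift (ι := Ordinal.{u}) H (Set.Iio α)
  rw [Ordinal.mk_Iio_ordinal, Cardinal.lift_lift] at this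
  have h2 : (⨆ x : Set.Iio α, Cardinal.lift.{u+1} #(H x.1)) ≤ Cardinal.lift.{u+1} c := by
    rcases isEmpty_or_nonempty (Set.Iio α) with h | h
    · simp [ciSup_of_empty]
    · exact ciSup_le' fun β => Cardinal.lift_le.2 (hH β.1 β.2)
  have h3 : Cardinal.lift.{u+1} #(⋃ β, ⋃ _ : β < α, H β) ≤
      Cardinal.lift.{u+1} α.card * Cardinal.lift.{u+1} c := by
    refine le_trans ?_ (mul_le_mul' le_rfl h2)
    exact this
  rw [← Cardinal.lift_mul, Cardinal.lift_le] at h3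
  refine h3.trans ?_
  calc α.card * c ≤ c * c := mul_le_mul' hα le_rfl
    _ = c := mul_eq_self hc


variable {X : Type u} [TopologicalSpace X]

/-- closure of a κ-small set is 2^κ-small, given good bases. -/
lemma mk_closure_small_le (hκ : ℵ₀ ≤ κ)
    (B : X → Set (Set X))
    (hBx : ∀ x, ∀ b ∈ B x, x ∈ b)
    (hBopen : ∀ x, ∀ b ∈ B x, IsOpen b)
    (hBne : ∀ x, (B x).Nonempty)
    (hBcard : ∀ x, #(B x) ≤ κ)
    (hBsep : ∀ x, (⋂ b ∈ B x, closure b) ⊆ {x})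
    (S : Set X) (hS : #S ≤ κ) : #(closure S) ≤ 2 ^ κ := by
  -- enumerate each basis
  have hf : ∀ y : X, ∃ f : κ.out → Set X, Set.range f = B y := fun y =>
    exists_range_eq (hBne y) (hBcard y)
  choose f hfr using hf
  -- the coding map
  set g : closure S → (κ.out → Set S) :=
    fun y k => Subtype.val ⁻¹' (f y.1 k) with hg
  have hginj : Function.Injective g := by
    intro y y' hyy'
    have key : (y' : X) ∈ ({(y : X)} : Set X) := by
      refine hBsep (y : X) ?_
      refine Set.mem_iInter₂.2 fun b hb => ?_
      obtain ⟨k, hk⟩ : ∃ k, f y.1 k = b := by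
        rw [← hfr y.1] at hb; exact hb
      have hb' : f y'.1 k ∈ B y'.1 := by rw [← hfr y'.1]; exact ⟨k, rfl⟩
      -- S ∩ b = S ∩ f y' k
      have hkk : Subtype.val ⁻¹' (f y.1 k) = (Subtype.val ⁻¹' (f y'.1 k) : Set S) :=
        congrFun hyy' k
      have htr : S ∩ b = S ∩ f y'.1 k := by
        ext z
        simp only [Set.mem_inter_iff]
        constructor
        · rintro ⟨hzS, hzb⟩
          refine ⟨hzS, ?_⟩
          have hz : (⟨z, hzS⟩ : S) ∈ Subtype.val ⁻¹' (f y.1 k) := by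
            simp only [Set.mem_preimage]; rw [hk]; exact hzb
          rw [hkk] at hz
          exact hz
        · rintro ⟨hzS, hzb⟩
          refine ⟨hzS, ?_⟩
          have hz : (⟨z, hzS⟩ : S) ∈ Subtype.val ⁻¹' (f y'.1 k) := by
            simp only [Set.mem_preimage]; exact hzb
          rw [← hkk] at hz
          rw [← hk]
          exact hz
      -- y' ∈ closure (S ∩ f y' k)
      have hy' : (y' : X) ∈ closure (S ∩ f y'.1 k) := by
        rw [mem_closure_iff]
        intro O hO hyO
        have hOb : IsOpen (O ∩ f y'.1 k) := hO.inter (hBopen _ _ hb')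
        have hyOb : (y' : X) ∈ O ∩ f y'.1 k := ⟨hyO, hBx _ _ hb'⟩
        have := (mem_closure_iff.1 y'.2) _ hOb hyOb
        obtain ⟨z, ⟨hzO, hzb⟩, hzS⟩ := this
        exact ⟨z, hzO, hzS, hzb⟩
      rw [← htr] at hy'
      exact closure_mono Set.inter_subset_right hy'
    exact Subtype.ext (Set.mem_singleton_iff.1 key).symm
  have := Cardinal.mk_le_of_injective hginj
  refine this.trans ?_
  rw [← Cardinal.power_def, Cardinal.mk_out, Cardinal.mk_set]
  calc (2 ^ #S) ^ κ ≤ (2 ^ κ) ^ κ :=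
        Cardinal.power_le_power_right (Cardinal.power_le_power_left (by norm_num) hS)
    _ = 2 ^ κ := two_power_pow hκ

theorem main {X : Type u} [TopologicalSpace X] (κ : Cardinal.{u}) (hκ : ℵ₀ ≤ κ)
    (B : X → Set (Set X))
    (hBx : ∀ x, ∀ b ∈ B x, x ∈ b)
    (hBopen : ∀ x, ∀ b ∈ B x, IsOpen b)
    (hBcard : ∀ x, #(B x) ≤ κ)
    (hBbase : ∀ x V, IsOpen V → x ∈ V → ∃ b ∈ B x, closure b ⊆ V)
    (hBsep : ∀ x, (⋂ b ∈ B x, closure b) ⊆ {x})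
    (hwLc : ∀ F : Set X, IsClosed F → ∀ 𝒲 : Set (Set X), (∀ W ∈ 𝒲, IsOpen W) →
      F ⊆ ⋃₀ 𝒲 → ∃ 𝒲' ⊆ 𝒲, #𝒲' ≤ κ ∧ F ⊆ closure (⋃₀ 𝒲'))
    (ht : ∀ (A : Set X) (x : X), x ∈ closure A → ∃ S ⊆ A, #S ≤ κ ∧ x ∈ closure S) :
    #X ≤ 2 ^ κ := by
  classical
  rcases isEmpty_or_nonempty X with hX | hX
  · rw [Cardinal.mk_eq_zero X]
    positivity
  have hμ : ℵ₀ ≤ (2:Cardinal.{u}) ^ κ := aleph0_le_two_power hκ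
  have hκμ : κ ≤ 2 ^ κ := (Cardinal.cantor κ).le
  have hBne : ∀ x, (B x).Nonempty := by
    intro x
    obtain ⟨b, hb, -⟩ := hBbase x univ isOpen_univ (mem_univ x)
    exact ⟨b, hb⟩
  have key2 : ∀ A : Set X, #A ≤ 2 ^ κ → #(closure A) ≤ 2 ^ κ := by
    intro A hA
    have hsub : closure A ⊆ ⋃ S ∈ {S : Set X | S ⊆ A ∧ #S ≤ κ}, closure S := by
      intro y hy
      obtain ⟨S, hSA, hSκ, hyS⟩ := ht A y hy
      exact Set.mem_biUnion ⟨hSA, hSκ⟩ hyS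
    refine (Cardinal.mk_le_mk_of_subset hsub).trans ?_
    refine (Cardinal.mk_biUnion_le _ _).trans ?_
    calc #{S : Set X | S ⊆ A ∧ #S ≤ κ} * ⨆ S : {S : Set X | S ⊆ A ∧ #S ≤ κ}, #(closure S.1)
        ≤ (2 ^ κ) * (2 ^ κ) := by
          refine mul_le_mul' (mk_small_subsets_le hκ hA) ?_
          rcases isEmpty_or_nonempty {S : Set X | S ⊆ A ∧ #S ≤ κ} with h | h
          · rw [ciSup_of_empty]
            exact bot_le
          · exact ciSup_le' fun S =>
              mk_closure_small_le hκ B hBx hBopen hBne hBcard hBsep S.1 S.2.2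
      _ = 2 ^ κ := two_power_mul_two_power hκ
  -- the witness function
  let w : Set (Set X) → X := fun 𝒱 =>
    if h : ((closure (⋃₀ 𝒱))ᶜ : Set X).Nonempty then h.choose else Classical.arbitrary X
  have hw : ∀ 𝒱 : Set (Set X), ((closure (⋃₀ 𝒱))ᶜ : Set X).Nonempty →
      w 𝒱 ∈ (closure (⋃₀ 𝒱))ᶜ := by
    intro 𝒱 h
    simp only [w, dif_pos h]
    exact h.choose_spec
  -- the expansion operator
  let pool : Set X → Set (Set X) := fun A => ⋃ x ∈ A, B x
  let Φ : Set X → Set X := fun A =>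
    closure A ∪ w '' {𝒱 : Set (Set X) | 𝒱 ⊆ pool A ∧ #𝒱 ≤ κ}
  have hΦsub : ∀ A : Set X, A ⊆ Φ A := fun A =>
    subset_closure.trans Set.subset_union_left
  have hΦclos : ∀ A : Set X, closure A ⊆ Φ A := fun A => Set.subset_union_left
  have hΦcard : ∀ A : Set X, #A ≤ 2 ^ κ → #(Φ A) ≤ 2 ^ κ := by
    intro A hA
    have hpool : #(pool A) ≤ 2 ^ κ := by
      refine (Cardinal.mk_biUnion_le _ _).trans ?_
      calc #A * ⨆ x : A, #(B x.1) ≤ (2 ^ κ) * (2 ^ κ) := by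
            refine mul_le_mul' hA ?_
            rcases isEmpty_or_nonempty A with h | h
            · rw [ciSup_of_empty]
              exact bot_le
            · exact ciSup_le' fun x => (hBcard x.1).trans hκμ
        _ = 2 ^ κ := two_power_mul_two_power hκ
    refine (Cardinal.mk_union_le _ _).trans ?_
    have h1 : #(closure A) ≤ 2 ^ κ := key2 A hA
    have h2 : #(w '' {𝒱 : Set (Set X) | 𝒱 ⊆ pool A ∧ #𝒱 ≤ κ}) ≤ 2 ^ κ :=
      (Cardinal.mk_image_le).trans (mk_small_subsets_le hκ hpool)
    calc #(closure A) + #(w '' {𝒱 : Set (Set X) | 𝒱 ⊆ pool A ∧ #𝒱 ≤ κ})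
        ≤ 2 ^ κ + 2 ^ κ := add_le_add h1 h2
      _ = 2 ^ κ := Cardinal.add_eq_self hμ
  -- the transfinite iteration
  set o : Ordinal.{u} := (Order.succ κ).ord with ho
  have hocard : o.card = Order.succ κ := Cardinal.card_ord _
  have hcof : o.cof = Order.succ κ := (Cardinal.isRegular_succ hκ).cof_eq
  have holim : Order.IsSuccLimit o := Cardinal.isSuccLimit_ord (hκ.trans (Order.le_succ κ))
  have hsucc_le : Order.succ κ ≤ 2 ^ κ := Order.succ_le_of_lt (Cardinal.cantor κ)
  let H : Ordinal.{u} → Set X :=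
    Ordinal.lt_wf.fix (fun α ih => Φ (⋃ β, ⋃ h : β < α, ih β h))
  have Hdef : ∀ α, H α = Φ (⋃ β, ⋃ _ : β < α, H β) := fun α =>
    WellFounded.fix_eq _ _ _
  set A : Ordinal.{u} → Set X := fun α => ⋃ β, ⋃ _ : β < α, H β with hA
  have hHA : ∀ α, H α = Φ (A α) := Hdef
  have hmono : ∀ β α, β < α → H β ⊆ A α := by
    intro β α hβα
    exact Set.subset_iUnion₂ (s := fun β _ => H β) β hβα
  -- cardinality bound
  have hcard : ∀ α, α ≤ o → #(H α) ≤ 2 ^ κ ∧ #(A α) ≤ 2 ^ κ := by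
    intro α
    induction α using Ordinal.induction with
    | h α ih =>
      intro hαo
      have hAcard : #(A α) ≤ 2 ^ κ := by
        refine mk_bUnion_ord_le H α hμ ?_ ?_
        · exact (Ordinal.card_le_card hαo).trans (hocard ▸ hsucc_le)
        · exact fun β hβ => (ih β hβ (hβ.le.trans hαo)).1
      refine ⟨?_, hAcard⟩
      rw [hHA α]
      exact hΦcard _ hAcard
  -- boundedness of small families
  have hbound : ∀ (ι : Type u) (g : ι → Ordinal.{u}), #ι ≤ κ → (∀ i, g i < o) →
      ∃ α < o, ∀ i, g i < α := by
    intro ι g hι hg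
    rcases isEmpty_or_nonempty ι with h | h
    · refine ⟨1, ?_, fun i => (IsEmpty.false i).elim⟩
      rw [ho, Cardinal.lt_ord, Ordinal.card_one]
      exact one_lt_aleph0.trans_le (hκ.trans (Order.le_succ κ))
    · have hlt : #ι < o.cof := by
        rw [hcof]; exact hι.trans_lt (Order.lt_succ κ)
      have hsup : (⨆ i, g i) < o := Ordinal.iSup_lt_ord hlt hg
      refine ⟨Order.succ (⨆ i, g i), holim.succ_lt hsup, fun i => ?_⟩
      exact (Ordinal.le_iSup g i).trans_lt (Order.lt_succ _)
  -- the final set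
  set Hf : Set X := A o with hHf
  have hHfcard : #Hf ≤ 2 ^ κ := (hcard o le_rfl).2
  have hmemHf : ∀ y : X, y ∈ Hf → ∃ β < o, y ∈ H β := by
    intro y hy
    obtain ⟨β, hβ, h⟩ := Set.mem_iUnion₂.1 hy
    exact ⟨β, hβ, h⟩
  have hHβf : ∀ β < o, H β ⊆ Hf := fun β hβ => hmono β o hβ
  -- Hf is closed
  have hclosed : IsClosed Hf := by
    rw [← closure_subset_iff_isClosed]
    intro y hy
    obtain ⟨S, hSHf, hSκ, hyS⟩ := ht Hf y hy
    have hidx : ∀ s : S, ∃ β, β < o ∧ (s : X) ∈ H β := by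
      intro s
      obtain ⟨β, hβ, hs⟩ := hmemHf s (hSHf s.2)
      exact ⟨β, hβ, hs⟩
    choose g hg1 hg2 using hidx
    obtain ⟨α, hαo, hβα⟩ := hbound S g (hSκ) hg1
    have hSA : S ⊆ A α := by
      intro s hs
      exact hmono (g ⟨s, hs⟩) α (hβα ⟨s, hs⟩) (hg2 ⟨s, hs⟩)
    have : y ∈ closure (A α) := closure_mono hSA hyS
    exact hHβf α hαo (hHA α ▸ hΦclos (A α) this)
  -- Hf is everything
  have huniv : Hf = Set.univ := by
    by_contra hne
    obtain ⟨z, hz⟩ : ((Hf)ᶜ).Nonempty := Set.nonempty_compl.2 hne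
    -- a regular neighborhood of z avoiding Hf
    obtain ⟨C, hC, hCc⟩ := hBbase z (Hf)ᶜ hclosed.isOpen_compl hz
    have hzC : z ∈ C := hBx z C hC
    -- cover Hf
    set 𝒲 : Set (Set X) := {b : Set X | ∃ x ∈ Hf, b ∈ B x ∧ closure b ⊆ (closure C)ᶜ}
      with h𝒲
    have h𝒲open : ∀ W ∈ 𝒲, IsOpen W := by
      rintro W ⟨x, hx, hW, -⟩
      exact hBopen x W hW
    have h𝒲cov : Hf ⊆ ⋃₀ 𝒲 := by
      intro x hx
      have hxC : x ∈ (closure C)ᶜ := by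
        intro hxc
        exact hCc hxc hx
      obtain ⟨b, hb, hbC⟩ := hBbase x (closure C)ᶜ isClosed_closure.isOpen_compl hxC
      exact ⟨b, ⟨x, hx, hb, hbC⟩, hBx x b hb⟩
    obtain ⟨𝒲', h𝒲'sub, h𝒲'κ, h𝒲'cl⟩ := hwLc Hf hclosed 𝒲 h𝒲open h𝒲cov
    -- z is not in the closure of ⋃₀ 𝒲'
    have hCopen : IsOpen C := hBopen z C hC
    have hzW : z ∈ (closure (⋃₀ 𝒲'))ᶜ := by
      intro hzW
      obtain ⟨y, hyC, W, hW𝒲', hyW⟩ := (mem_closure_iff.1 hzW) C hCopen hzC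
      obtain ⟨x, -, -, hWC⟩ := h𝒲'sub hW𝒲'
      exact hWC (subset_closure hyW) (subset_closure hyC)
    have hne𝒲 : ((closure (⋃₀ 𝒲'))ᶜ : Set X).Nonempty := ⟨z, hzW⟩
    -- locate the family inside some stage
    have hidx : ∀ W : 𝒲', ∃ x, x ∈ Hf ∧ (W : Set X) ∈ B x := by
      intro W
      obtain ⟨x, hx, hW, -⟩ := h𝒲'sub W.2
      exact ⟨x, hx, hW⟩
    choose x hx1 hx2 using hidx
    have hidx2 : ∀ W : 𝒲', ∃ β, β < o ∧ x W ∈ H β := by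
      intro W
      obtain ⟨β, hβ, h⟩ := hmemHf (x W) (hx1 W)
      exact ⟨β, hβ, h⟩
    choose g hg1 hg2 using hidx2
    obtain ⟨α, hαo, hβα⟩ := hbound 𝒲' g h𝒲'κ hg1
    have h𝒲'pool : 𝒲' ⊆ pool (A α) := by
      intro W hW
      refine Set.mem_biUnion ?_ (hx2 ⟨W, hW⟩)
      exact hmono (g ⟨W, hW⟩) α (hβα ⟨W, hW⟩) (hg2 ⟨W, hW⟩)
    have hwin : w 𝒲' ∈ H α := by
      rw [hHA α]
      exact Set.mem_union_right _ ⟨𝒲', ⟨h𝒲'pool, h𝒲'κ⟩, rfl⟩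
    have : w 𝒲' ∈ closure (⋃₀ 𝒲') := h𝒲'cl (hHβf α hαo hwin)
    exact hw 𝒲' hne𝒲 this
  have := hHfcard
  rw [huniv, Cardinal.mk_univ] at this
  exact this


end AlasAux

/-- Alas's theorem: an initially κ-compact Hausdorff space with `wL_c(X) ≤ κ`,
`t(X) ≤ κ`, `ψ_c(X) ≤ κ` and a dense set of points of character `≤ κ` has
cardinality at most `2 ^ κ`. -/
theorem alas {X : Type u} [TopologicalSpace X] [T2Space X]
    (κ : Cardinal.{u}) (hκ : ℵ₀ ≤ κ)
    (hinit : ∀ 𝒰 : Set (Set X), (∀ U ∈ 𝒰, IsOpen U) → ⋃₀ 𝒰 = Set.univ →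
      #𝒰 ≤ κ → ∃ t ⊆ 𝒰, t.Finite ∧ ⋃₀ t = Set.univ)
    (hwLc : ∀ F : Set X, IsClosed F → ∀ 𝒲 : Set (Set X), (∀ W ∈ 𝒲, IsOpen W) →
      F ⊆ ⋃₀ 𝒲 → ∃ 𝒲' ⊆ 𝒲, #𝒲' ≤ κ ∧ F ⊆ closure (⋃₀ 𝒲'))
    (ht : ∀ (A : Set X) (x : X), x ∈ closure A → ∃ S ⊆ A, #S ≤ κ ∧ x ∈ closure S)
    (hψ : ∀ x : X, ∃ 𝒰 : Set (Set X), #𝒰 ≤ κ ∧ (∀ U ∈ 𝒰, IsOpen U ∧ x ∈ U) ∧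
      (⋂ U ∈ 𝒰, closure U) = {x})
    (hdense : ∃ D : Set X, Dense D ∧ ∀ x ∈ D, ∃ B : Set (Set X), #B ≤ κ ∧
      (∀ U ∈ B, IsOpen U ∧ x ∈ U) ∧ ∀ V : Set X, IsOpen V → x ∈ V → ∃ U ∈ B, U ⊆ V) :
    #X ≤ 2 ^ κ := by
  classical
  choose 𝒰 h𝒰card h𝒰mem h𝒰int using hψ
  -- the base: finite intersections of the pseudobase
  set B : X → Set (Set X) :=
    fun x => Set.range (fun t : Finset (𝒰 x) => ⋂ U ∈ t, (U : Set X)) with hB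
  have hBx : ∀ x, ∀ b ∈ B x, x ∈ b := by
    rintro x b ⟨t, rfl⟩
    exact Set.mem_iInter₂.2 fun U _ => (h𝒰mem x U U.2).2
  have hBopen : ∀ x, ∀ b ∈ B x, IsOpen b := by
    rintro x b ⟨t, rfl⟩
    exact isOpen_biInter_finset fun U _ => (h𝒰mem x U U.2).1
  have hBcard : ∀ x, #(B x) ≤ κ := by
    intro x
    refine Cardinal.mk_range_le.trans ?_
    rcases finite_or_infinite (𝒰 x) with h | h
    · exact (Cardinal.mk_le_aleph0).trans hκ
    · rw [Cardinal.mk_finset_of_infinite]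
      exact h𝒰card x
  have hBsep : ∀ x, (⋂ b ∈ B x, closure b) ⊆ {x} := by
    intro x
    intro y hy
    rw [← h𝒰int x]
    refine Set.mem_iInter₂.2 fun U hU => ?_
    have hb : U ∈ B x := by
      refine ⟨{⟨U, hU⟩}, ?_⟩
      simp
    exact Set.mem_iInter₂.1 hy U hb
  have hBbase : ∀ x V, IsOpen V → x ∈ V → ∃ b ∈ B x, closure b ⊆ V := by
    intro x V hV hxV
    -- apply initial κ-compactness to a canonical cover
    set 𝒞 : Set (Set X) := insert V ((fun U => (closure U)ᶜ) '' 𝒰 x) with h𝒞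
    have h𝒞open : ∀ W ∈ 𝒞, IsOpen W := by
      rintro W (rfl | ⟨U, hU, rfl⟩)
      · exact hV
      · exact isClosed_closure.isOpen_compl
    have h𝒞cov : ⋃₀ 𝒞 = Set.univ := by
      refine Set.eq_univ_of_forall fun y => ?_
      by_cases hy : y ∈ ⋂ U ∈ 𝒰 x, closure U
      · rw [h𝒰int x] at hy
        rw [hy]
        exact ⟨V, Set.mem_insert _ _, hxV⟩
      · obtain ⟨U, hU, hyU⟩ : ∃ U ∈ 𝒰 x, y ∉ closure U := by
          by_contra hc
          push_neg at hc
          exact hy (Set.mem_iInter₂.2 hc)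
        exact ⟨(closure U)ᶜ, Set.mem_insert_of_mem _ ⟨U, hU, rfl⟩, hyU⟩
    have h𝒞card : #𝒞 ≤ κ := by
      refine (Cardinal.mk_insert_le).trans ?_
      calc #((fun U => (closure U)ᶜ) '' 𝒰 x) + 1 ≤ κ + 1 :=
            add_le_add_left ((Cardinal.mk_image_le).trans (h𝒰card x)) 1
        _ = κ := Cardinal.add_one_eq hκ
    obtain ⟨t, ht𝒞, htfin, htcov⟩ := hinit 𝒞 h𝒞open h𝒞cov h𝒞card
    -- extract the finitely many pseudobase elements used
    set P : Set X → Prop := fun W => ∃ U, U ∈ 𝒰 x ∧ W = (closure U)ᶜ with hP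
    set u : Set X → Set X := fun W => if h : P W then h.choose else Set.univ with hu
    have huspec : ∀ W, P W → u W ∈ 𝒰 x ∧ W = (closure (u W))ᶜ := by
      intro W hW
      simp only [hu, dif_pos hW]
      exact hW.choose_spec
    set F : Set (Set X) := (u '' t) ∩ 𝒰 x with hF
    have hFfin : F.Finite := (htfin.image u).inter_of_left _
    have hF𝒰 : F ⊆ 𝒰 x := Set.inter_subset_right
    have hFV : (⋂ U ∈ F, closure U) ⊆ V := by
      intro y hy
      by_contra hyV
      have hyuniv : y ∈ ⋃₀ t := htcov ▸ Set.mem_univ y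
      obtain ⟨W, hWt, hyW⟩ := hyuniv
      rcases ht𝒞 hWt with rfl | ⟨U, hU, rfl⟩
      · exact hyV hyW
      · have hPW : P ((closure U)ᶜ) := ⟨U, hU, rfl⟩
        obtain ⟨hu𝒰, hueq⟩ := huspec _ hPW
        have huF : u ((closure U)ᶜ) ∈ F := ⟨⟨_, hWt, rfl⟩, hu𝒰⟩
        have h1 : y ∈ closure (u ((closure U)ᶜ)) := Set.mem_iInter₂.1 hy _ huF
        have hyW' : y ∈ (closure U)ᶜ := hyW
        rw [hueq] at hyW'
        exact hyW' h1
    -- turn F into a finset of the subtype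
    set F' : Set (𝒰 x) := Subtype.val ⁻¹' F with hF'
    have hF'fin : F'.Finite := hFfin.preimage Subtype.val_injective.injOn
    refine ⟨⋂ U ∈ hF'fin.toFinset, (U : Set X), ⟨hF'fin.toFinset, rfl⟩, ?_⟩
    refine subset_trans ?_ hFV
    refine Set.subset_iInter₂ fun U hU => ?_
    refine closure_mono ?_
    intro y hy
    have hUF' : (⟨U, hF𝒰 hU⟩ : 𝒰 x) ∈ hF'fin.toFinset := by
      rw [Set.Finite.mem_toFinset]
      exact hU
    exact Set.mem_iInter₂.1 hy _ hUF'
  exact AlasAux.main κ hκ B hBx hBopen hBcard hBbase hBsep hwLc ht
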